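/- arXiv:1906.05453 — 4 statements merged into one kernel-verified Lean document; each statement's English description precedes it below -/
import Mathlib

section
/- Let $h : [-M, M] \to \mathbb{R}$ be an odd strictly increasing continuous function with $|h(x)| \le c_1|x|$ for some $c_1 > 0$, and suppose a differentiable function $\rho : [t_0, \infty) \to [-M', M']$ satisfies $\dot{\rho}(t) = -h^{-1}(k_1 \rho(t))$ with $k_1 > 0$ and $k_1 M' \le h(M)$. Then $|\rho(t)| \le |\rho(t_0)| e^{-\frac{k_1}{c_1}(t - t_0)}$ for all $t \ge t_0$; in particular $\rho(t) \to 0$ as $t \to \infty$. -/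
open Real Filter

theorem stmt_7 (h g ρ : ℝ → ℝ) (M M' c1 k1 t0 : ℝ)
    (hM : 0 < M) (hM' : 0 < M') (hc1 : 0 < c1) (hk1 : 0 < k1)
    (hodd : ∀ x ∈ Set.Icc (-M) M, h (-x) = -h x)
    (hmono : StrictMonoOn h (Set.Icc (-M) M))
    (hcont : ContinuousOn h (Set.Icc (-M) M))
    (hbound : ∀ x ∈ Set.Icc (-M) M, |h x| ≤ c1 * |x|)
    (hginv : ∀ y : ℝ, |y| ≤ h M → g y ∈ Set.Icc (-M) M ∧ h (g y) = y)
    (hrange : k1 * M' ≤ h M)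
    (hρmap : ∀ t ≥ t0, ρ t ∈ Set.Icc (-M') M')
    (hρdiff : ∀ t ≥ t0, DifferentiableAt ℝ ρ t)
    (hρode : ∀ t ≥ t0, deriv ρ t = -g (k1 * ρ t)) :
    (∀ t ≥ t0, |ρ t| ≤ |ρ t0| * Real.exp (-(k1 / c1) * (t - t0))) ∧
      Tendsto ρ atTop (nhds 0) := by
  have h0mem : (0:ℝ) ∈ Set.Icc (-M) M := ⟨by linarith, hM.le⟩
  have hh0 : h 0 = 0 := by
    have := hodd 0 h0mem
    simp at this
    linarith
  -- key sign/magnitude lemma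
  have key : ∀ t ≥ t0, ρ t * g (k1 * ρ t) ≥ k1 / c1 * (ρ t)^2 := by
    intro t ht
    set y := k1 * ρ t with hy
    have hρt := hρmap t ht
    have hyb : |y| ≤ h M := by
      have : |ρ t| ≤ M' := abs_le.mpr ⟨hρt.1, hρt.2⟩
      calc |y| = k1 * |ρ t| := by rw [hy, abs_mul, abs_of_pos hk1]
        _ ≤ k1 * M' := by nlinarith
        _ ≤ h M := hrange
    obtain ⟨hgmem, hghy⟩ := hginv y hyb
    have hmag : |y| ≤ c1 * |g y| := by
      have := hbound (g y) hgmem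
      rw [hghy] at this; exact this
    -- sign
    have hsign : y * g y ≥ 0 := by
      rcases lt_trichotomy y 0 with hneg | hzero | hpos
      · have : g y < 0 := by
          by_contra hle
          push_neg at hle
          have := hmono.le_iff_le h0mem hgmem |>.mpr hle
          rw [hh0, hghy] at this
          linarith
        nlinarith
      · simp [hzero]
      · have : 0 < g y := by
          by_contra hle
          push_neg at hle
          have := hmono.le_iff_le hgmem h0mem |>.mpr hle
          rw [hh0, hghy] at this
          linarith
        nlinarith
    have habs : y * g y = |y| * |g y| := by
      rw [← abs_mul, abs_of_nonneg hsign]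
    have h1 : y^2 ≤ c1 * (y * g y) := by
      rw [habs]
      nlinarith [mul_le_mul_of_nonneg_left hmag (abs_nonneg y), sq_abs y]
    rw [ge_iff_le, div_mul_eq_mul_div, div_le_iff₀ hc1]
    have hy2 : y^2 = k1^2 * (ρ t)^2 := by rw [hy]; ring
    have hyg : y * g y = k1 * (ρ t * g y) := by rw [hy]; ring
    rw [hy2, hyg] at h1
    nlinarith
  set L := 2 * k1 / c1 with hL
  have hLpos : 0 < L := by positivity
  set v : ℝ → ℝ := fun t => (ρ t)^2 * Real.exp (L * (t - t0)) with hv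
  -- derivative computation
  have hvderiv : ∀ t ≥ t0, HasDerivAt v
      ((2 * ρ t ^ 1 * deriv ρ t) * Real.exp (L * (t - t0)) +
        (ρ t)^2 * (Real.exp (L * (t - t0)) * (L * 1))) t := by
    intro t ht
    have hd : HasDerivAt ρ (deriv ρ t) t := (hρdiff t ht).hasDerivAt
    have hu : HasDerivAt (fun s => (ρ s)^2) (2 * ρ t ^ 1 * deriv ρ t) t := by
      have := hd.pow 2
      have h2 : HasDerivAt (ρ ^ 2) (2 * ρ t * deriv ρ t) t := by simpa using this
      rw [pow_one]; exact h2
    have hE : HasDerivAt (fun s => Real.exp (L * (s - t0)))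
        (Real.exp (L * (t - t0)) * (L * 1)) t := by
      have hlin : HasDerivAt (fun s : ℝ => L * (s - t0)) (L * 1) t :=
        ((hasDerivAt_id t).sub_const t0).const_mul L
      exact hlin.exp
    exact hu.mul hE
  have hvanti : AntitoneOn v (Set.Ici t0) := by
    apply antitoneOn_of_deriv_nonpos (convex_Ici t0)
    · intro t ht
      exact ((hvderiv t ht).continuousAt).continuousWithinAt
    · intro t ht
      rw [interior_Ici] at ht
      exact (hvderiv t (le_of_lt ht)).differentiableAt.differentiableWithinAt
    · intro t ht
      rw [interior_Ici] at ht
      have ht' : t0 ≤ t := le_of_lt ht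
      rw [(hvderiv t ht').deriv]
      have hode := hρode t ht'
      have hkey := key t ht'
      have hEpos : 0 < Real.exp (L * (t - t0)) := Real.exp_pos _
      rw [hode]
      have : 2 * ρ t ^ 1 * -g (k1 * ρ t) * Real.exp (L * (t - t0)) +
          ρ t ^ 2 * (Real.exp (L * (t - t0)) * (L * 1)) =
          Real.exp (L * (t - t0)) * (L * ρ t ^ 2 - 2 * (ρ t * g (k1 * ρ t))) := by
        ring
      rw [this]
      apply mul_nonpos_of_nonneg_of_nonpos hEpos.le
      have : L * ρ t ^2 = 2 * (k1 / c1 * ρ t ^2) := by rw [hL]; ring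
      rw [this]
      linarith
  -- main bound
  have hbound2 : ∀ t ≥ t0, |ρ t| ≤ |ρ t0| * Real.exp (-(k1 / c1) * (t - t0)) := by
    intro t ht
    have hvle : v t ≤ v t0 := hvanti (Set.self_mem_Ici) ht ht
    have hEpos : 0 < Real.exp (L * (t - t0)) := Real.exp_pos _
    have hv0 : v t0 = (ρ t0)^2 := by simp [hv]
    have hsq : (ρ t)^2 ≤ (ρ t0)^2 * Real.exp (-L * (t - t0)) := by
      rw [hv0] at hvle
      have : (ρ t)^2 = v t * Real.exp (-L * (t - t0)) := by
        rw [hv]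
        rw [mul_assoc, ← Real.exp_add]
        simp
      rw [this]
      apply mul_le_mul_of_nonneg_right hvle (Real.exp_pos _).le
    set B := |ρ t0| * Real.exp (-(k1 / c1) * (t - t0)) with hB
    have hBnn : 0 ≤ B := by positivity
    have hBsq : B^2 = (ρ t0)^2 * Real.exp (-L * (t - t0)) := by
      rw [hB, mul_pow, ← Real.exp_nat_mul, sq_abs]
      congr 1
      push_cast
      rw [hL]
      ring
    have : |ρ t|^2 ≤ B^2 := by rw [sq_abs, hBsq]; exact hsq
    nlinarith [abs_nonneg (ρ t)]
  refine ⟨hbound2, ?_⟩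
  have hg0 : Tendsto (fun t => |ρ t0| * Real.exp (-(k1 / c1) * (t - t0))) atTop (nhds 0) := by
    rw [show (0:ℝ) = |ρ t0| * 0 by ring]
    apply Tendsto.const_mul
    apply Real.tendsto_exp_atBot.comp
    apply Tendsto.const_mul_atTop_of_neg (by have := div_pos hk1 hc1; linarith : -(k1/c1) < 0)
    exact tendsto_atTop_add_const_right _ _ tendsto_id
  apply squeeze_zero_norm' ?_ hg0
  filter_upwards [eventually_ge_atTop t0] with t ht
  simpa using hbound2 t ht
end

section
/- Let $L > 0$ and let $\chi : [0, \infty) \to \mathbb{R}$ be continuous, non-decreasing, and strictly increasing on $[L - \delta_2, L + \delta_2]$ for some $\delta_2 > 0$. Suppose a differentiable function $\zeta : [t_0, \infty) \to [0, \infty)$ satisfies $\dot{\zeta}(t) = \chi(L) - v^r(t)$ where $v^r(t)$ satisfies $(v^r(t) - \chi(L))(\zeta(t) - L) \ge 0$ with equality if and only if $\zeta(t) = L$, and additionally $v^r(t) = \chi(\zeta(t))$. Then $V(t) = \frac{1}{2}(\zeta(t) - L)^2$ satisfies $\dot{V}(t) \le 0$ with $\dot{V}(t) = 0$ iff $\zeta(t)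 = L$, and $\zeta(t) \to L$ as $t \to \infty$. -/
open Filter

theorem stmt_12 (L δ2 t0 : ℝ) (χ : ℝ → ℝ) (ζ vr : ℝ → ℝ)
    (hL : 0 < L) (hδ2 : 0 < δ2)
    (hχcont : ContinuousOn χ (Set.Ici 0))
    (hχmono : MonotoneOn χ (Set.Ici 0))
    (hχstrict : StrictMonoOn χ (Set.Icc (L - δ2) (L + δ2)))
    (hζmap : ∀ t ≥ t0, ζ t ∈ Set.Ici (0 : ℝ))
    (hζdiff : ∀ t ≥ t0, DifferentiableAt ℝ ζ t)
    (hζode : ∀ t ≥ t0, deriv ζ t = χ L - vr t)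
    (hsign : ∀ t ≥ t0, (vr t - χ L) * (ζ t - L) ≥ 0)
    (heq : ∀ t ≥ t0, (vr t - χ L) * (ζ t - L) = 0 ↔ ζ t = L)
    (hvr : ∀ t ≥ t0, vr t = χ (ζ t)) :
    (∀ t ≥ t0, deriv (fun s => (1 / 2) * (ζ s - L) ^ 2) t ≤ 0 ∧
      (deriv (fun s => (1 / 2) * (ζ s - L) ^ 2) t = 0 ↔ ζ t = L)) ∧
    Tendsto ζ atTop (nhds L) := by
  -- derivative of V
  have hVd : ∀ t ≥ t0, HasDerivAt (fun s => (1 / 2) * (ζ s - L) ^ 2)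
      ((ζ t - L) * deriv ζ t) t := by
    intro t ht
    have h1 : HasDerivAt ζ (deriv ζ t) t := (hζdiff t ht).hasDerivAt
    have h2 := (((h1.sub_const L).pow 2).const_mul ((1:ℝ)/2))
    refine h2.congr_deriv ?_
    push_cast
    ring
  have hVderiv : ∀ t ≥ t0, deriv (fun s => (1 / 2) * (ζ s - L) ^ 2) t
      = -((vr t - χ L) * (ζ t - L)) := by
    intro t ht
    rw [(hVd t ht).deriv, hζode t ht]
    ring
  have hpart1 : ∀ t ≥ t0, deriv (fun s => (1 / 2) * (ζ s - L) ^ 2) t ≤ 0 ∧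
      (deriv (fun s => (1 / 2) * (ζ s - L) ^ 2) t = 0 ↔ ζ t = L) := by
    intro t ht
    rw [hVderiv t ht]
    constructor
    · linarith [hsign t ht]
    · rw [neg_eq_zero]; exact heq t ht
  refine ⟨hpart1, ?_⟩
  -- V is antitone on Ici t0
  have hζcont : ContinuousOn ζ (Set.Ici t0) := fun t ht =>
    ((hζdiff t ht).continuousAt).continuousWithinAt
  have hVanti : AntitoneOn (fun s => (1 / 2) * (ζ s - L) ^ 2) (Set.Ici t0) := by
    apply antitoneOn_of_deriv_nonpos (convex_Ici t0)
    · exact continuousOn_const.mul ((hζcont.sub continuousOn_const).pow 2)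
    · intro x hx
      rw [interior_Ici] at hx
      exact ((((hζdiff x hx.le).sub_const L).pow 2).const_mul _).differentiableWithinAt
    · intro x hx
      rw [interior_Ici] at hx
      exact (hpart1 x hx.le).1
  have habs : ∀ t1, t0 ≤ t1 → ∀ t, t1 ≤ t → |ζ t - L| ≤ |ζ t1 - L| := by
    intro t1 ht1 t ht
    have := hVanti (Set.mem_Ici.2 ht1) (Set.mem_Ici.2 (ht1.trans ht)) ht
    simp only at this
    nlinarith [abs_nonneg (ζ t - L), abs_nonneg (ζ t1 - L), sq_abs (ζ t - L),
      sq_abs (ζ t1 - L)]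
  -- key: for each ε > 0 there is t1 ≥ t0 with |ζ t1 - L| < ε
  have hkey : ∀ ε > (0:ℝ), ∃ t1, t0 ≤ t1 ∧ |ζ t1 - L| < ε := by
    intro ε hε
    by_contra hcon
    push_neg at hcon
    set ε' := min ε δ2 with hε'def
    have hε'pos : 0 < ε' := lt_min hε hδ2
    have hε'δ2 : ε' ≤ δ2 := min_le_right _ _
    have hlb : ∀ t, t0 ≤ t → ε' ≤ |ζ t - L| :=
      fun t ht => le_trans (min_le_left _ _) (hcon t ht)
    have hne : ∀ t, t0 ≤ t → ζ t ≠ L := by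
      intro t ht h
      have := hlb t ht
      rw [h, sub_self, abs_zero] at this
      linarith
    rcases lt_or_gt_of_ne (hne t0 le_rfl) with hlt | hgt
    · -- ζ t0 < L : then ζ t ≤ L - ε' for all t ≥ t0
      have hbelow : ∀ t, t0 ≤ t → ζ t ≤ L - ε' := by
        intro t ht
        by_contra hgt'
        push_neg at hgt'
        have hgtL : L < ζ t := by
          rcases lt_trichotomy (ζ t) L with h | h | h
          · exfalso
            have := hlb t ht
            rw [abs_of_nonpos (by linarith)] at this
            linarith
          · exact absurd h (hne t ht)
          · exact h
        obtain ⟨c, hc, hcL⟩ := intermediate_value_Icc ht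
          (hζcont.mono Set.Icc_subset_Ici_self) ⟨hlt.le, hgtL.le⟩
        exact hne c hc.1 hcL
      -- derivative lower bound
      have h0 : (0:ℝ) ≤ L - ε' := le_trans (hζmap t0 le_rfl) (hbelow t0 le_rfl)
      have hk : 0 < χ L - χ (L - ε') := by
        have := hχstrict (Set.mem_Icc.2 ⟨by linarith, by linarith⟩)
          (Set.mem_Icc.2 ⟨by linarith, by linarith⟩) (by linarith : L - ε' < L)
        linarith
      set k := χ L - χ (L - ε') with hkdef
      have hdlb : ∀ t, t0 ≤ t → k ≤ deriv ζ t := by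
        intro t ht
        have hm : χ (ζ t) ≤ χ (L - ε') :=
          hχmono (hζmap t ht) (Set.mem_Ici.2 h0) (hbelow t ht)
        rw [hζode t ht, hvr t ht]
        simp only [hkdef]
        linarith
      -- g t = k*t - ζ t is antitone
      have hganti : AntitoneOn (fun s => k * s - ζ s) (Set.Ici t0) := by
        apply antitoneOn_of_deriv_nonpos (convex_Ici t0)
        · exact (continuousOn_const.mul continuousOn_id).sub hζcont
        · intro x hx
          rw [interior_Ici] at hx
          exact (((differentiable_id.const_mul k).differentiableAt).sub
            (hζdiff x hx.le)).differentiableWithinAt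
        · intro x hx
          rw [interior_Ici] at hx
          have hd : HasDerivAt (fun s => k * s - ζ s) (k - deriv ζ x) x := by
            have := ((hasDerivAt_id x).const_mul k).sub (hζdiff x hx.le).hasDerivAt
            exact this.congr_deriv (by ring)
          rw [hd.deriv]
          linarith [hdlb x hx.le]
      set T := t0 + (L - ζ t0) / k + 1 with hTdef
      have hT : t0 ≤ T := by
        have : 0 ≤ (L - ζ t0) / k := div_nonneg (by linarith) hk.le
        simp only [hTdef]; linarith
      have := hganti (Set.mem_Ici.2 le_rfl) (Set.mem_Ici.2 hT) hT
      simp only at this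
      have hkT : k * T = k * t0 + (L - ζ t0) + k := by
        rw [hTdef]; field_simp
      have : L + k ≤ ζ T := by nlinarith
      linarith [hbelow T hT]
    · -- ζ t0 > L : then ζ t ≥ L + ε' for all t ≥ t0
      have habove : ∀ t, t0 ≤ t → L + ε' ≤ ζ t := by
        intro t ht
        by_contra hlt'
        push_neg at hlt'
        have hltL : ζ t < L := by
          rcases lt_trichotomy (ζ t) L with h | h | h
          · exact h
          · exact absurd h (hne t ht)
          · exfalso
            have := hlb t ht
            rw [abs_of_nonneg (by linarith)] at this
            linarith
        obtain ⟨c, hc, hcL⟩ := intermediate_value_Icc' ht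
          (hζcont.mono Set.Icc_subset_Ici_self) ⟨hltL.le, hgt.le⟩
        exact hne c hc.1 hcL
      have hk : 0 < χ (L + ε') - χ L := by
        have := hχstrict (Set.mem_Icc.2 ⟨by linarith, by linarith⟩)
          (Set.mem_Icc.2 ⟨by linarith, by linarith⟩) (by linarith : L < L + ε')
        linarith
      set k := χ (L + ε') - χ L with hkdef
      have hdub : ∀ t, t0 ≤ t → deriv ζ t ≤ -k := by
        intro t ht
        have hm : χ (L + ε') ≤ χ (ζ t) :=
          hχmono (Set.mem_Ici.2 (by linarith)) (hζmap t ht) (habove t ht)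
        rw [hζode t ht, hvr t ht]
        simp only [hkdef]
        linarith
      have hganti : AntitoneOn (fun s => ζ s + k * s) (Set.Ici t0) := by
        apply antitoneOn_of_deriv_nonpos (convex_Ici t0)
        · exact hζcont.add (continuousOn_const.mul continuousOn_id)
        · intro x hx
          rw [interior_Ici] at hx
          exact ((hζdiff x hx.le).add
            ((differentiable_id.const_mul k).differentiableAt)).differentiableWithinAt
        · intro x hx
          rw [interior_Ici] at hx
          have hd : HasDerivAt (fun s => ζ s + k * s) (deriv ζ x + k) x := by
            have := (hζdiff x hx.le).hasDerivAt.add ((hasDerivAt_id x).const_mul k)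
            exact this.congr_deriv (by ring)
          rw [hd.deriv]
          linarith [hdub x hx.le]
      set T := t0 + (ζ t0 - L) / k + 1 with hTdef
      have hT : t0 ≤ T := by
        have : 0 ≤ (ζ t0 - L) / k := div_nonneg (by linarith) hk.le
        simp only [hTdef]; linarith
      have := hganti (Set.mem_Ici.2 le_rfl) (Set.mem_Ici.2 hT) hT
      simp only at this
      have hkT : k * T = k * t0 + (ζ t0 - L) + k := by
        rw [hTdef]; field_simp
      have : ζ T ≤ L - k := by nlinarith
      linarith [habove T hT]
  -- conclude convergence
  rw [Metric.tendsto_atTop]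
  intro ε hε
  obtain ⟨t1, ht1, ht1ε⟩ := hkey ε hε
  refine ⟨t1, fun t ht => ?_⟩
  rw [Real.dist_eq]
  exact lt_of_le_of_lt (habs t1 ht1 t ht) ht1ε
end

section
/- Let $\zeta : [t_0, \infty) \to \mathbb{R}$ be differentiable with $\zeta(t_0) > 0$, and suppose $\dot{\zeta}(t) \ge 0$ whenever $0 < \zeta(t) \le L - \delta_1$ (with $0 < \delta_1 < L$). Then $\zeta(t) > 0$ for all $t \ge t_0$. -/
theorem stmt_15 (ζ : ℝ → ℝ) (t0 L δ1 : ℝ)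
    (hδ1 : 0 < δ1) (hδ1L : δ1 < L)
    (hdiff : ∀ t ≥ t0, DifferentiableAt ℝ ζ t)
    (hinit : ζ t0 > 0)
    (hderiv : ∀ t ≥ t0, 0 < ζ t → ζ t ≤ L - δ1 → deriv ζ t ≥ 0) :
    ∀ t ≥ t0, ζ t > 0 := by
  intro t1 ht1
  by_contra h
  push_neg at h
  set g : ℝ → ℝ := fun u => ζ (max u t0) with hg_def
  have hg_cont : Continuous g := by
    rw [continuous_iff_continuousAt]
    intro u
    have hmax : Continuous fun v : ℝ => max v t0 := continuous_id.max continuous_const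
    exact ContinuousAt.comp (hdiff (max u t0) (le_max_right _ _)).continuousAt
      hmax.continuousAt
  have hg_eq : ∀ u, t0 ≤ u → g u = ζ u := by
    intro u hu
    simp [hg_def, max_eq_left hu]
  have hg_ev : ∀ u, t0 < u → g =ᶠ[nhds u] ζ := by
    intro u hu
    filter_upwards [isOpen_Ioi.mem_nhds (show u ∈ Set.Ioi t0 from hu)] with v hv
    exact hg_eq v (le_of_lt hv)
  have hb : (0:ℝ) < min (ζ t0) (L - δ1) := lt_min hinit (by linarith)
  set b := min (ζ t0) (L - δ1) with hb_def
  have hbL : b ≤ L - δ1 := min_le_right _ _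
  have hbt0 : b ≤ ζ t0 := min_le_left _ _
  -- first zero
  set S : Set ℝ := Set.Icc t0 t1 ∩ g ⁻¹' Set.Iic 0 with hS_def
  have hScl : IsClosed S := isClosed_Icc.inter (isClosed_Iic.preimage hg_cont)
  have hSne : S.Nonempty := ⟨t1, ⟨ht1, le_refl t1⟩, by
    simpa [Set.mem_preimage, hg_eq t1 ht1] using h⟩
  have hSbdd : BddBelow S := ⟨t0, fun u hu => hu.1.1⟩
  set r := sInf S with hr_def
  have hrS : r ∈ S := hScl.csInf_mem hSne hSbdd
  have hrI : r ∈ Set.Icc t0 t1 := hrS.1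
  have hgr : g r ≤ 0 := hrS.2
  have hζr : ζ r ≤ 0 := by rw [← hg_eq r hrI.1]; exact hgr
  have hrt0 : t0 < r := by
    rcases lt_or_eq_of_le hrI.1 with h1 | h1
    · exact h1
    · exfalso
      rw [← h1] at hgr
      rw [hg_eq t0 le_rfl] at hgr
      linarith
  have hpos : ∀ u, t0 ≤ u → u < r → 0 < ζ u := by
    intro u hu hur
    by_contra hu0
    push_neg at hu0
    have : u ∈ S := ⟨⟨hu, le_trans (le_of_lt hur) hrI.2⟩, by
      simpa [Set.mem_preimage, hg_eq u hu] using hu0⟩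
    exact absurd (csInf_le hSbdd this) (not_le.mpr hur)
  -- last time g = b before r
  set T : Set ℝ := Set.Icc t0 r ∩ g ⁻¹' {b} with hT_def
  have hTcl : IsClosed T := isClosed_Icc.inter (isClosed_singleton.preimage hg_cont)
  have hTne : T.Nonempty := by
    have hsub := intermediate_value_Icc' (le_of_lt hrt0) hg_cont.continuousOn
    have hbmem : b ∈ Set.Icc (g r) (g t0) := by
      constructor
      · linarith
      · rw [hg_eq t0 le_rfl]; exact hbt0
    rcases hsub hbmem with ⟨c, hc, hgc⟩
    exact ⟨c, hc, hgc⟩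
  have hTbdd : BddAbove T := ⟨r, fun u hu => hu.1.2⟩
  set s := sSup T with hs_def
  have hsT : s ∈ T := hTcl.csSup_mem hTne hTbdd
  have hsI : s ∈ Set.Icc t0 r := hsT.1
  have hgs : g s = b := hsT.2
  have hsr : s < r := by
    rcases lt_or_eq_of_le hsI.2 with h1 | h1
    · exact h1
    · exfalso; rw [h1] at hgs; linarith
  -- on (s, r], g < b
  have hlt : ∀ u, s < u → u ≤ r → g u < b := by
    intro u hsu hur
    rcases lt_trichotomy (g u) b with h1 | h1 | h1
    · exact h1
    · exact absurd (le_csSup hTbdd (⟨⟨le_trans hsI.1 (le_of_lt hsu), hur⟩, h1⟩ : u ∈ T))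
        (not_le.mpr hsu)
    · exfalso
      have hsub := intermediate_value_Icc' hur hg_cont.continuousOn
      have hbmem : b ∈ Set.Icc (g r) (g u) := ⟨by linarith, le_of_lt h1⟩
      rcases hsub hbmem with ⟨c, hc, hgc⟩
      have hcT : c ∈ T := ⟨⟨le_trans hsI.1 (le_trans (le_of_lt hsu) hc.1), hc.2⟩, hgc⟩
      have : c ≤ s := le_csSup hTbdd hcT
      have : s < c := lt_of_lt_of_le hsu hc.1
      linarith
  -- monotone on [s, r]
  have hmono : MonotoneOn g (Set.Icc s r) := by
    apply monotoneOn_of_deriv_nonneg (convex_Icc s r) hg_cont.continuousOn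
    · intro u hu
      rw [interior_Icc] at hu
      have hut0 : t0 < u := lt_of_le_of_lt hsI.1 hu.1
      exact (((hg_ev u hut0).differentiableAt_iff).mpr
        (hdiff u (le_of_lt hut0))).differentiableWithinAt
    · intro u hu
      rw [interior_Icc] at hu
      have hut0 : t0 < u := lt_of_le_of_lt hsI.1 hu.1
      have hdg : deriv g u = deriv ζ u := (hg_ev u hut0).deriv_eq
      rw [hdg]
      have hζu : 0 < ζ u := hpos u (le_of_lt hut0) hu.2
      have hζub : ζ u < b := by
        rw [← hg_eq u (le_of_lt hut0)]
        exact hlt u hu.1 (le_of_lt hu.2)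
      exact hderiv u (le_of_lt hut0) hζu (le_trans (le_of_lt hζub) hbL)
  have := hmono ⟨le_rfl, le_of_lt hsr⟩ ⟨le_of_lt hsr, le_rfl⟩ (le_of_lt hsr)
  rw [hgs] at this
  linarith
end

section
/- Let $\psi : [t_0, \infty) \to [-a, a]$ (with $a > 0$) be differentiable, and suppose there exists $\alpha > 0$ such that at every time $t$, either $\vartheta(t) > 0$ and $\dot{\psi}(t) \le -\alpha$, or $\vartheta(t) < 0$ and $\dot{\psi}(t) \ge \alpha$, or $\vartheta(t) = 0$, where $\vartheta$ is continuous. If $\vartheta(t_0) \ne 0$ and $\vartheta$ changes sign only by passing through zero, then there exists $t^* \le t_0 + \frac{2a}{\alpha}$ with $\vartheta(t^*) = 0$. -/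
open Real

lemma aux_18 (ψ ϑ : ℝ → ℝ) (t0 a α : ℝ)
    (ha : 0 < a) (hα : 0 < α)
    (hmap : ∀ t ≥ t0, ψ t ∈ Set.Icc (-a) a)
    (hdiff : ∀ t ≥ t0, DifferentiableAt ℝ ψ t)
    (hϑcont : Continuous ϑ)
    (hdyn : ∀ t ≥ t0, (ϑ t > 0 ∧ deriv ψ t ≤ -α) ∨ (ϑ t < 0 ∧ deriv ψ t ≥ α) ∨ ϑ t = 0)
    (hinit : 0 < ϑ t0) :
    ∃ tstar, t0 ≤ tstar ∧ tstar ≤ t0 + 2 * a / α ∧ ϑ tstar = 0 := by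
  set T := t0 + 2 * a / α with hTdef
  have hT : t0 < T := lt_add_of_pos_right t0 (by positivity)
  by_contra hcon
  push_neg at hcon
  have hne : ∀ t ∈ Set.Icc t0 T, ϑ t ≠ 0 := fun t ht => hcon t ht.1 ht.2
  have hpos : ∀ t ∈ Set.Icc t0 T, 0 < ϑ t := by
    intro t ht
    by_contra hle
    push_neg at hle
    have hlt : ϑ t < 0 := lt_of_le_of_ne hle (hne t ht)
    have : (0 : ℝ) ∈ Set.Icc (ϑ t) (ϑ t0) := ⟨hlt.le, hinit.le⟩
    have := intermediate_value_Icc' ht.1 (hϑcont.continuousOn) this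
    obtain ⟨c, hc, hc0⟩ := this
    exact hne c ⟨hc.1, hc.2.trans ht.2⟩ hc0
  have hderiv : ∀ t ∈ Set.Icc t0 T, deriv ψ t ≤ -α := by
    intro t ht
    rcases hdyn t ht.1 with h | h | h
    · exact h.2
    · exact absurd (hpos t ht) (by linarith [h.1])
    · exact absurd h (hne t ht)
  -- g t = ψ t + α t is antitone on [t0, T]
  have hg : AntitoneOn (fun t => ψ t + α * t) (Set.Icc t0 T) := by
    apply antitoneOn_of_deriv_nonpos (convex_Icc t0 T)
    · intro t ht
      exact ((hdiff t ht.1).add ((differentiable_id.const_mul α) t)).continuousAt.continuousWithinAt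
    · intro t ht
      rw [interior_Icc] at ht
      exact ((hdiff t ht.1.le).add ((differentiable_id.const_mul α) t)).differentiableWithinAt
    · intro t ht
      rw [interior_Icc] at ht
      have hd : HasDerivAt (fun t => ψ t + α * t) (deriv ψ t + α) t := by
        have h1 := (hdiff t ht.1.le).hasDerivAt
        have h2 : HasDerivAt (fun t : ℝ => α * t) α t := by
          simpa using (hasDerivAt_id t).const_mul α
        exact h1.add h2
      rw [hd.deriv]
      have := hderiv t ⟨ht.1.le, ht.2.le⟩
      linarith
  have hgT := hg (Set.left_mem_Icc.2 hT.le) (Set.right_mem_Icc.2 hT.le) hT.le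
  simp only at hgT
  have hψT : ψ T ≤ -a := by
    have h1 : ψ t0 ≤ a := (hmap t0 le_rfl).2
    have hα' : α ≠ 0 := ne_of_gt hα
    have : α * T = α * t0 + 2 * a := by
      rw [hTdef]; field_simp
    nlinarith
  have hψT' : ψ T = -a := le_antisymm hψT (hmap T hT.le).1
  -- ψ has a min at T on [T, ∞), so right derivative ≥ 0
  have hTd : DifferentiableAt ℝ ψ T := hdiff T hT.le
  have hslope : Filter.Tendsto (slope ψ T) (nhdsWithin T (Set.Ioi T)) (nhds (deriv ψ T)) := by
    have := hasDerivAt_iff_tendsto_slope.1 hTd.hasDerivAt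
    exact this.mono_left (nhdsWithin_mono T (fun x hx => ne_of_gt hx))
  have hge : 0 ≤ deriv ψ T := by
    refine ge_of_tendsto hslope ?_
    filter_upwards [self_mem_nhdsWithin] with t ht
    have ht' : T < t := ht
    have h1 : ψ T ≤ ψ t := by
      rw [hψT']
      exact (hmap t (hT.le.trans ht'.le)).1
    rw [slope_def_field]
    rw [div_nonneg_iff]
    left
    constructor <;> linarith
  have := hderiv T (Set.right_mem_Icc.2 hT.le)
  linarith

theorem stmt_18 (ψ ϑ : ℝ → ℝ) (t0 a α : ℝ)
    (ha : 0 < a) (hα : 0 < α)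
    (hmap : ∀ t ≥ t0, ψ t ∈ Set.Icc (-a) a)
    (hdiff : ∀ t ≥ t0, DifferentiableAt ℝ ψ t)
    (hϑcont : Continuous ϑ)
    (hdyn : ∀ t ≥ t0, (ϑ t > 0 ∧ deriv ψ t ≤ -α) ∨ (ϑ t < 0 ∧ deriv ψ t ≥ α) ∨ ϑ t = 0)
    (hinit : ϑ t0 ≠ 0) :
    ∃ tstar, t0 ≤ tstar ∧ tstar ≤ t0 + 2 * a / α ∧ ϑ tstar = 0 := by
  rcases hinit.lt_or_gt with h0 | h0
  · -- ϑ t0 < 0 : apply aux to -ψ, -ϑ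
    have hmap' : ∀ t ≥ t0, (fun t => -ψ t) t ∈ Set.Icc (-a) a := by
      intro t ht
      have := hmap t ht
      dsimp only
      exact ⟨by linarith [this.2], by linarith [this.1]⟩
    have hdiff' : ∀ t ≥ t0, DifferentiableAt ℝ (fun t => -ψ t) t :=
      fun t ht => (hdiff t ht).neg
    have hdyn' : ∀ t ≥ t0, ((-ϑ t > 0 ∧ deriv (fun t => -ψ t) t ≤ -α) ∨
        (-ϑ t < 0 ∧ deriv (fun t => -ψ t) t ≥ α) ∨ -ϑ t = 0) := by
      intro t ht
      have hd : deriv (fun t => -ψ t) t = -deriv ψ t := by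
        simp [deriv.neg]
      rcases hdyn t ht with h | h | h
      · right; left; exact ⟨by linarith [h.1], by rw [hd]; linarith [h.2]⟩
      · left; exact ⟨by linarith [h.1], by rw [hd]; linarith [h.2]⟩
      · right; right; simp [h]
    obtain ⟨tstar, h1, h2, h3⟩ := aux_18 (fun t => -ψ t) (fun t => -ϑ t) t0 a α ha hα
      hmap' hdiff' hϑcont.neg hdyn' (by simpa using h0)
    exact ⟨tstar, h1, h2, by simpa using h3⟩
  · exact aux_18 ψ ϑ t0 a α ha hα hmap hdiff hϑcont hdyn h0
end
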